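/- If (w, A) with w = t w₁ + w₀ and A = t A₁ + A₀ (w₀, w₁ time-independent densities, A₀, A₁ time-independent 1-forms on B), then the generalized monopole equation *_B(D^B w + Ȧ w − A ẇ) = dA + Ȧ ∧ A holds for all t if and only if the two affine monopole equations *_B D^B w₁ = dA₁ and *_B(D^B w₀ + A₁ w₀ − A₀ w₁) = dA₀ + A₁ ∧ A₀ hold, since D^B w + Ȧw − Aẇ = t D^B w₁ + (D^B w₀ + w₀A₁ − w₁A₀) and dA + Ȧ∧A = t dA₁ + (dA₀ + A₁∧A₀). -/
import Mathlib


/-- Theorem IV of the paper, abstract model of the monopole equations on a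
3-dimensional Einstein-Weyl space `B`: let `W` model the densities of weight `-1` on `B`,
`Ω1` and `Ω2` the (density-valued) `1`- and `2`-forms, `star` the Hodge star `*_B`, `DB`
the Einstein-Weyl derivative, `d` the exterior derivative, `smul` the product of a `1`-form
with a density, and `wedge` the (alternating) wedge product of `1`-forms.  For the affine
ansatz `w = t w₁ + w₀`, `A = t A₁ + A₀` (coefficients time-independent), the generalized
monopole equation `*_B(D^B w + Ȧ w - A ẇ) = dA + Ȧ ∧ A` holds for all `t` if and only if
the two affine monopole equations `*_B D^B w₁ = dA₁` and
`*_B(D^B w₀ + A₁ w₀ - A₀ w₁) = dA₀ + A₁ ∧ A₀` hold. -/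
theorem affine_monopole_equations
    (W Ω1 Ω2 : Type*) [AddCommGroup W] [Module ℝ W]
    [AddCommGroup Ω1] [Module ℝ Ω1] [AddCommGroup Ω2] [Module ℝ Ω2]
    (star : Ω1 →ₗ[ℝ] Ω2)
    (DB : W →ₗ[ℝ] Ω1)
    (d : Ω1 →ₗ[ℝ] Ω2)
    (smul : Ω1 →ₗ[ℝ] W →ₗ[ℝ] Ω1)
    (wedge : Ω1 →ₗ[ℝ] Ω1 →ₗ[ℝ] Ω2)
    (halt : ∀ a : Ω1, wedge a a = 0)
    (w0 w1 : W) (A0 A1 : Ω1) :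
    (∀ t : ℝ,
      star (DB (t • w1 + w0) + smul A1 (t • w1 + w0) - smul (t • A1 + A0) w1)
        = d (t • A1 + A0) + wedge A1 (t • A1 + A0))
    ↔ (star (DB w1) = d A1 ∧
       star (DB w0 + smul A1 w0 - smul A0 w1) = d A0 + wedge A1 A0) := by
  have key : ∀ t : ℝ,
      (star (DB (t • w1 + w0) + smul A1 (t • w1 + w0) - smul (t • A1 + A0) w1)
        = d (t • A1 + A0) + wedge A1 (t • A1 + A0))
      ↔ (t • star (DB w1) + star (DB w0 + smul A1 w0 - smul A0 w1)
        = t • d A1 + (d A0 + wedge A1 A0)) := by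
    intro t
    have h1 : wedge A1 (t • A1 + A0) = wedge A1 A0 := by
      simp [map_add, map_smul, halt]
    have hL : star (DB (t • w1 + w0) + smul A1 (t • w1 + w0) - smul (t • A1 + A0) w1)
        = t • star (DB w1) + star (DB w0 + smul A1 w0 - smul A0 w1) := by
      simp only [map_add, map_smul, map_sub, LinearMap.add_apply, LinearMap.smul_apply,
        LinearMap.sub_apply]
      module
    have hR : d (t • A1 + A0) + wedge A1 (t • A1 + A0)
        = t • d A1 + (d A0 + wedge A1 A0) := by
      rw [h1]; simp only [map_add, map_smul]; module
    rw [hL, hR]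
  simp only [key]
  constructor
  · intro h
    have h0 := h 0
    have h1 := h 1
    simp only [zero_smul, one_smul, zero_add] at h0 h1
    refine ⟨?_, h0⟩
    have := h1
    rw [h0] at this
    exact add_right_cancel this
  · rintro ⟨h1, h2⟩ t
    rw [h1, h2]
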